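/- Assume 0 < ε < 1/2 satisfies (1/2)·(1 − 2ε)^{−2}·(1 + 2ε) ≤ 1, that 0 < p ≤ 1 satisfies p^{k−1} B^k ≤ ε·8^{−k} for all k ≥ 2, and that |J_k| ≤ B^k for all k ≥ 2. Then for every α ∈ S one has |f(α)_k| ≤ p ε · 4^{−k} for every k ≥ 2, and consequently ‖f(α)‖ ≤ p ε / 2; in particular f maps S into S. -/

import Mathlib

open scoped ENNReal

lemma aux_summable_tail (c r : ℝ) (hc : 0 ≤ c) (hr0 : 0 ≤ r) (hr1 : r < 1) :
    Summable (fun k : ℕ => if 2 ≤ k then c * r ^ k else 0) := by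
  apply Summable.of_nonneg_of_le (fun k => ?_) (fun k => ?_)
      ((summable_geometric_of_lt_one hr0 hr1).mul_left c)
  · split <;> positivity
  · split
    · exact le_refl _
    · positivity

lemma aux_tsum_tail (c r : ℝ) (hc : 0 ≤ c) (hr0 : 0 ≤ r) (hr1 : r < 1) :
    ∑' k : ℕ, (if 2 ≤ k then c * r ^ k else 0) = c * r ^ 2 / (1 - r) := by
  have hs := aux_summable_tail c r hc hr0 hr1
  rw [Summable.tsum_eq_zero_add hs]
  rw [Summable.tsum_eq_zero_add ((summable_nat_add_iff 1).2 hs)]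
  have : ∀ n : ℕ, (if 2 ≤ n + 1 + 1 then c * r ^ (n + 1 + 1) else 0) = c * r ^ 2 * r ^ n := by
    intro n
    rw [if_pos (by omega)]
    ring
  simp only [this]
  rw [tsum_mul_left, tsum_geometric_of_lt_one hr0 hr1]
  norm_num
  field_simp

/-- The norm `‖α‖ = Σ_{k≥2} 2^k |α_k|`, valued in `[0,∞]` so that it is always defined;
membership in the space `S` below forces it to be finite. -/
noncomputable def seqNorm (α : ℕ → ℝ) : ℝ≥0∞ :=
  ∑' k : ℕ, if 2 ≤ k then (2 : ℝ≥0∞) ^ k * ENNReal.ofReal |α k| else 0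

lemma seqNorm_eq (α : ℕ → ℝ) :
    seqNorm α = ∑' k : ℕ, ENNReal.ofReal (if 2 ≤ k then (2:ℝ) ^ k * |α k| else 0) := by
  unfold seqNorm
  congr 1; funext k
  split
  · rw [ENNReal.ofReal_mul (by positivity)]
    congr 1
    rw [ENNReal.ofReal_pow (by norm_num : (0:ℝ) ≤ 2)]
    norm_num
  · simp

lemma norm_bound (α : ℕ → ℝ) (c : ℝ) (hc : 0 ≤ c) (h : seqNorm α ≤ ENNReal.ofReal c) :
    Summable (fun k : ℕ => if 2 ≤ k then (2:ℝ) ^ k * |α k| else 0) ∧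
    ∑' k : ℕ, (if 2 ≤ k then (2:ℝ) ^ k * |α k| else 0) ≤ c := by
  set h' : ℕ → ℝ := fun k => if 2 ≤ k then (2:ℝ) ^ k * |α k| else 0 with hh'
  have hnn : ∀ k, 0 ≤ h' k := by intro k; simp only [hh']; split <;> positivity
  rw [seqNorm_eq] at h
  have hne : (∑' k : ℕ, ENNReal.ofReal (h' k)) ≠ ⊤ :=
    ne_top_of_le_ne_top ENNReal.ofReal_ne_top h
  have hsum : Summable h' := by
    have := ENNReal.summable_toReal hne
    simpa [ENNReal.toReal_ofReal (hnn _)] using this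
  refine ⟨hsum, ?_⟩
  rw [← ENNReal.ofReal_le_ofReal_iff hc, ENNReal.ofReal_tsum_of_nonneg hnn hsum]
  exact h

/-- `A(α) = Σ_{k≥2} k α_k`. -/
noncomputable def seqA (α : ℕ → ℝ) : ℝ :=
  ∑' k : ℕ, if 2 ≤ k then (k : ℝ) * α k else 0

lemma seqA_bound (α : ℕ → ℝ) (c : ℝ) (hc : 0 ≤ c) (h : seqNorm α ≤ ENNReal.ofReal c) :
    |seqA α| ≤ c := by
  obtain ⟨hsum, hle⟩ := norm_bound α c hc h
  have hterm : ∀ k : ℕ, |if 2 ≤ k then (k : ℝ) * α k else 0| ≤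
      (if 2 ≤ k then (2:ℝ) ^ k * |α k| else 0) := by
    intro k
    split
    · rw [abs_mul, abs_of_nonneg (by positivity : (0:ℝ) ≤ (k:ℝ))]
      have : (k : ℝ) ≤ (2:ℝ) ^ k := by
        calc (k : ℝ) ≤ ((2 ^ k : ℕ) : ℝ) := by
              exact_mod_cast (Nat.lt_two_pow_self (n := k)).le
          _ = (2:ℝ) ^ k := by push_cast; ring
      exact mul_le_mul_of_nonneg_right this (abs_nonneg _)
    · simp
  have hsum2 : Summable (fun k : ℕ => if 2 ≤ k then (k : ℝ) * α k else 0) := by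
    apply Summable.of_abs
    exact Summable.of_nonneg_of_le (fun k => abs_nonneg _) hterm hsum
  unfold seqA
  have h1 : ‖∑' k : ℕ, (if 2 ≤ k then (k : ℝ) * α k else 0)‖ ≤
      ∑' k : ℕ, ‖if 2 ≤ k then (k : ℝ) * α k else 0‖ :=
    norm_tsum_le_tsum_norm (by simpa [Real.norm_eq_abs] using hsum2.abs)
  simp only [Real.norm_eq_abs] at h1
  exact h1.trans ((Summable.tsum_le_tsum hterm hsum2.abs hsum).trans hle)

/-- The map `f(α)_k = J_k p^k (1 - 2A(α))^{-2k} (1 - 2A(α)/p)^k` for `k ≥ 2`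
(entries of index `< 2` are irrelevant and set to `0`). -/
noncomputable def fMap (p : ℝ) (J : ℕ → ℝ) (α : ℕ → ℝ) : ℕ → ℝ := fun k =>
  if 2 ≤ k then J k * p ^ k * ((1 - 2 * seqA α)⁻¹) ^ (2 * k) * (1 - 2 * seqA α / p) ^ k
  else 0

/-- The set `S = {α : ‖α‖ ≤ p ε}`. -/
def Sset (p ε : ℝ) : Set (ℕ → ℝ) := {α | seqNorm α ≤ ENNReal.ofReal (p * ε)}

theorem stmt0 (p ε B : ℝ) (J : ℕ → ℝ)
    (hε0 : 0 < ε) (hε : ε < 1 / 2)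
    (hcond : (1 / 2) * ((1 - 2 * ε)⁻¹) ^ 2 * (1 + 2 * ε) ≤ 1)
    (hp0 : 0 < p) (hp1 : p ≤ 1) (hB : 0 < B)
    (hpB : ∀ k : ℕ, 2 ≤ k → p ^ (k - 1) * B ^ k ≤ ε * (8 : ℝ)⁻¹ ^ k)
    (hJ : ∀ k : ℕ, 2 ≤ k → |J k| ≤ B ^ k) :
    ∀ α ∈ Sset p ε,
      (∀ k : ℕ, 2 ≤ k → |fMap p J α k| ≤ p * ε * (4 : ℝ)⁻¹ ^ k) ∧
      seqNorm (fMap p J α) ≤ ENNReal.ofReal (p * ε / 2) ∧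
      fMap p J α ∈ Sset p ε := by
  intro α hα
  have hpε0 : 0 ≤ p * ε := by positivity
  have hA : |seqA α| ≤ p * ε := seqA_bound α (p * ε) hpε0 hα
  set A := seqA α with hAdef
  have hAε : |A| ≤ ε := hA.trans (by nlinarith)
  obtain ⟨hAl, hAr⟩ := abs_le.1 hAε
  have h2ε : 0 < 1 - 2 * ε := by linarith
  have h2A : 0 < 1 - 2 * A := by linarith
  have hinv0 : 0 ≤ (1 - 2 * A)⁻¹ := by positivity
  have hinv : (1 - 2 * A)⁻¹ ≤ (1 - 2 * ε)⁻¹ := by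
    apply inv_anti₀ h2ε; linarith
  have hdiv : |A / p| ≤ ε := by
    rw [abs_div, abs_of_pos hp0]
    exact (div_le_iff₀ hp0).2 (by linarith [hA])
  obtain ⟨hdl, hdr⟩ := abs_le.1 hdiv
  have hq : |1 - 2 * A / p| ≤ 1 + 2 * ε := by
    have hrw : 2 * A / p = 2 * (A / p) := by ring
    rw [abs_le, hrw]
    constructor <;> linarith
  have hbase : ((1 - 2 * ε)⁻¹) ^ 2 * (1 + 2 * ε) ≤ 2 := by nlinarith [hcond]
  have hpoint : ∀ k : ℕ, 2 ≤ k → |fMap p J α k| ≤ p * ε * (4 : ℝ)⁻¹ ^ k := by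
    intro k hk
    obtain ⟨j, rfl⟩ : ∃ j, k = j + 2 := ⟨k - 2, by omega⟩
    have hkey : p ^ (j + 1) * B ^ (j + 2) ≤ ε * (8 : ℝ)⁻¹ ^ (j + 2) := by
      simpa using hpB (j + 2) (by omega)
    simp only [fMap, if_pos hk, ← hAdef]
    calc |J (j+2) * p ^ (j+2) * ((1 - 2 * A)⁻¹) ^ (2 * (j+2)) * (1 - 2 * A / p) ^ (j+2)|
        = |J (j+2)| * p ^ (j+2) * ((1 - 2 * A)⁻¹) ^ (2 * (j+2)) * |1 - 2 * A / p| ^ (j+2) := by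
          rw [abs_mul, abs_mul, abs_mul, abs_pow, abs_pow, abs_pow, abs_of_pos hp0,
            abs_of_nonneg hinv0]
      _ ≤ B ^ (j+2) * p ^ (j+2) * ((1 - 2 * ε)⁻¹) ^ (2 * (j+2)) * (1 + 2 * ε) ^ (j+2) := by
          gcongr <;>
            first
              | positivity
              | exact hJ (j+2) hk
              | exact hinv
              | exact hq
      _ = B ^ (j+2) * p ^ (j+2) * ((((1 - 2 * ε)⁻¹) ^ 2) ^ (j+2) * (1 + 2 * ε) ^ (j+2)) := by
          rw [pow_mul]; ring
      _ = B ^ (j+2) * p ^ (j+2) * (((1 - 2 * ε)⁻¹) ^ 2 * (1 + 2 * ε)) ^ (j+2) := by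
          rw [mul_pow]
      _ ≤ B ^ (j+2) * p ^ (j+2) * 2 ^ (j+2) := by
          gcongr <;> first | positivity | exact hbase
      _ = p * (p ^ (j+1) * B ^ (j+2)) * 2 ^ (j+2) := by ring
      _ ≤ p * (ε * (8 : ℝ)⁻¹ ^ (j+2)) * 2 ^ (j+2) := by
          gcongr
      _ = p * ε * ((8 : ℝ)⁻¹ * 2) ^ (j+2) := by rw [mul_pow]; ring
      _ = p * ε * (4 : ℝ)⁻¹ ^ (j+2) := by norm_num
  have hnormle : seqNorm (fMap p J α) ≤ ENNReal.ofReal (p * ε / 2) := by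
    rw [seqNorm_eq]
    have hterm : ∀ k : ℕ,
        ENNReal.ofReal (if 2 ≤ k then (2:ℝ) ^ k * |fMap p J α k| else 0) ≤
        ENNReal.ofReal (if 2 ≤ k then (p * ε) * (2⁻¹ : ℝ) ^ k else 0) := by
      intro k
      apply ENNReal.ofReal_le_ofReal
      split
      · rename_i hk
        calc (2:ℝ) ^ k * |fMap p J α k| ≤ (2:ℝ) ^ k * (p * ε * (4 : ℝ)⁻¹ ^ k) := by
              gcongr <;> first | positivity | exact hpoint k hk
          _ = (p * ε) * ((2:ℝ) * 4⁻¹) ^ k := by rw [mul_pow]; ring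
          _ = (p * ε) * (2⁻¹ : ℝ) ^ k := by norm_num
      · exact le_refl 0
    calc (∑' k : ℕ, ENNReal.ofReal (if 2 ≤ k then (2:ℝ) ^ k * |fMap p J α k| else 0))
        ≤ ∑' k : ℕ, ENNReal.ofReal (if 2 ≤ k then (p * ε) * (2⁻¹ : ℝ) ^ k else 0) :=
          ENNReal.tsum_le_tsum hterm
      _ = ENNReal.ofReal (∑' k : ℕ, (if 2 ≤ k then (p * ε) * (2⁻¹ : ℝ) ^ k else 0)) := by
          rw [ENNReal.ofReal_tsum_of_nonneg (fun k => by split <;> positivity)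
            (aux_summable_tail (p * ε) 2⁻¹ hpε0 (by norm_num) (by norm_num))]
      _ = ENNReal.ofReal (p * ε / 2) := by
          rw [aux_tsum_tail (p * ε) 2⁻¹ hpε0 (by norm_num) (by norm_num)]
          congr 1
          ring
  refine ⟨hpoint, hnormle, ?_⟩
  exact hnormle.trans (ENNReal.ofReal_le_ofReal (by linarith))
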